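/- For all indices u, v ∈ {1,…,n} and all r ∈ ℝ^n: −D[u | v](r) equals ∂_u∂_v g(r) if both u, v ∈ I, equals −∂_u∂_v g(r) if both u, v ∈ J, and equals 0 if u and v lie in different blocks of the partition. (This is the recovery h(X,Y) = −D_M[X|Y] of the quasi-Hessian metric from the canonical divergence, combined with the coordinate expression h = Σ_{i,k∈I} ∂_i∂_k g dξ_i dξ_k − Σ_{j,l∈J} ∂_j∂_l g dξ_j dξ_l of Proposition 2.5.) -/

import Mathlib

/-!
Statement 8: recovery of the quasi-Hessian metric from the canonical
divergence: `-D[u|v](r) = ∂_u∂_v g(r)` if `u, v ∈ I`, `= -∂_u∂_v g(r)` if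
`u, v ∈ J`, and `= 0` if `u` and `v` lie in different blocks.
-/

/-- Partial derivative in the k-th coordinate. -/
noncomputable def pder {n : ℕ} (k : Fin n) (g : (Fin n → ℝ) → ℝ) : (Fin n → ℝ) → ℝ :=
  fun a => deriv (fun t => g (Function.update a k t)) (a k)

/-- The canonical divergence `D(a,b)` associated to a generating function `g`
and a partition `I ⊔ J` of the index set. -/
noncomputable def canDiv {n : ℕ} (I J : Finset (Fin n)) (g : (Fin n → ℝ) → ℝ)
    (a b : Fin n → ℝ) : ℝ :=
  g a - g b - ∑ j ∈ J, pder j g a * (a j - b j) + ∑ i ∈ I, pder i g b * (b i - a i)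

/-- Partial derivative in the u-th coordinate of the first argument. -/
noncomputable def dFst {n : ℕ} (u : Fin n) (F : (Fin n → ℝ) → (Fin n → ℝ) → ℝ) :
    (Fin n → ℝ) → (Fin n → ℝ) → ℝ :=
  fun a b => deriv (fun t => F (Function.update a u t) b) (a u)

/-- Partial derivative in the u-th coordinate of the second argument. -/
noncomputable def dSnd {n : ℕ} (u : Fin n) (F : (Fin n → ℝ) → (Fin n → ℝ) → ℝ) :
    (Fin n → ℝ) → (Fin n → ℝ) → ℝ :=
  fun a b => deriv (fun t => F a (Function.update b u t)) (b u)

lemma hasDerivAt_updateLine {n : ℕ} (a : Fin n → ℝ) (k : Fin n) (t : ℝ) :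
    HasDerivAt (fun s : ℝ => Function.update a k s) (Pi.single k 1) t := by
  have h : (fun s : ℝ => Function.update a k s)
      = fun s : ℝ => Function.update a k 0 + s • (Pi.single k 1 : Fin n → ℝ) := by
    funext s
    funext i
    rcases eq_or_ne i k with h | h
    · subst h; simp
    · simp [Function.update_apply, h, Pi.single_apply]
  rw [h]
  simpa using ((hasDerivAt_id t).smul_const (Pi.single k (1:ℝ))).const_add (Function.update a k 0)

lemma hasDerivAt_comp_update {n : ℕ} {f : (Fin n → ℝ) → ℝ} (hf : Differentiable ℝ f)
    (a : Fin n → ℝ) (k : Fin n) :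
    HasDerivAt (fun t => f (Function.update a k t)) (fderiv ℝ f a (Pi.single k 1)) (a k) := by
  have h1 : HasFDerivAt f (fderiv ℝ f a) (Function.update a k (a k)) := by
    rw [Function.update_eq_self]; exact (hf a).hasFDerivAt
  exact h1.comp_hasDerivAt (a k) (hasDerivAt_updateLine a k (a k))

lemma pder_eq {n : ℕ} {f : (Fin n → ℝ) → ℝ} (hf : Differentiable ℝ f)
    (a : Fin n → ℝ) (k : Fin n) :
    pder k f a = fderiv ℝ f a (Pi.single k 1) :=
  (hasDerivAt_comp_update hf a k).deriv

lemma hasDerivAt_pder {n : ℕ} {f : (Fin n → ℝ) → ℝ} (hf : Differentiable ℝ f)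
    (a : Fin n → ℝ) (k : Fin n) :
    HasDerivAt (fun t => f (Function.update a k t)) (pder k f a) (a k) := by
  rw [pder_eq hf a k]; exact hasDerivAt_comp_update hf a k

lemma contDiff_pder {n : ℕ} {g : (Fin n → ℝ) → ℝ} (hg : ContDiff ℝ (⊤ : ℕ∞) g) (k : Fin n) :
    ContDiff ℝ (⊤ : ℕ∞) (pder k g) := by
  have h : pder k g = fun a => fderiv ℝ g a (Pi.single k 1) :=
    funext fun a => pder_eq (hg.differentiable (by simp)) a k
  rw [h]
  exact (ContinuousLinearMap.apply ℝ ℝ (Pi.single k (1:ℝ))).contDiff.comp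
    (hg.fderiv_right (m := (⊤:ℕ∞)) (by simp))

lemma pder_comm {n : ℕ} {g : (Fin n → ℝ) → ℝ} (hg : ContDiff ℝ (⊤ : ℕ∞) g)
    (u v : Fin n) (r : Fin n → ℝ) :
    pder u (pder v g) r = pder v (pder u g) r := by
  have hd : Differentiable ℝ g := hg.differentiable (by simp)
  have h2 : Differentiable ℝ (fderiv ℝ g) := (hg.fderiv_right (m := (⊤:ℕ∞)) (by simp)).differentiable (by simp)
  have key : ∀ w z : Fin n,
      pder w (pder z g) r = fderiv ℝ (fderiv ℝ g) r (Pi.single w 1) (Pi.single z 1) := by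
    intro w z
    have hpz : pder z g = fun x => fderiv ℝ g x (Pi.single z 1) :=
      funext fun a => pder_eq hd a z
    have h3 : HasFDerivAt (fun x => fderiv ℝ g x (Pi.single z (1:ℝ)))
        ((ContinuousLinearMap.apply ℝ ℝ (Pi.single z (1:ℝ))).comp (fderiv ℝ (fderiv ℝ g) r)) r := by
      have hL := (ContinuousLinearMap.apply ℝ ℝ (Pi.single z (1:ℝ))).hasFDerivAt
        (x := fderiv ℝ g r)
      exact hL.comp r (h2 r).hasFDerivAt
    have hdpz : Differentiable ℝ (pder z g) := (contDiff_pder hg z).differentiable (by simp)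
    rw [pder_eq hdpz r w]
    have : fderiv ℝ (pder z g) r =
        (ContinuousLinearMap.apply ℝ ℝ (Pi.single z (1:ℝ))).comp (fderiv ℝ (fderiv ℝ g) r) := by
      rw [hpz]; exact h3.fderiv
    rw [this]; rfl
  rw [key u v, key v u]
  exact second_derivative_symmetric (fun y => (hd y).hasFDerivAt) (h2 r).hasFDerivAt _ _

lemma hasDerivAt_update_coord {n : ℕ} (b : Fin n → ℝ) (v i : Fin n) (t : ℝ) :
    HasDerivAt (fun s => Function.update b v s i) (if i = v then 1 else 0) t := by
  rcases eq_or_ne i v with h | h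
  · subst h; simpa using (hasDerivAt_id' t)
  · simpa [Function.update_apply, h] using hasDerivAt_const t (b i)

lemma dSnd_canDiv {n : ℕ} (I J : Finset (Fin n)) (g : (Fin n → ℝ) → ℝ)
    (hg : ContDiff ℝ (⊤ : ℕ∞) g) (v : Fin n) (a b : Fin n → ℝ) :
    dSnd v (canDiv I J g) a b =
      -(pder v g b) + (if v ∈ J then pder v g a else 0)
        + (∑ i ∈ I, pder v (pder i g) b * (b i - a i))
        + (if v ∈ I then pder v g b else 0) := by
  have hgd : Differentiable ℝ g := hg.differentiable (by simp)
  have H : HasDerivAt (fun t => canDiv I J g a (Function.update b v t))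
      ((0 - pder v g b
        - ∑ j ∈ J, pder j g a * (0 - if j = v then 1 else 0))
        + ∑ i ∈ I, (pder v (pder i g) b * (Function.update b v (b v) i - a i)
            + pder i g (Function.update b v (b v)) * ((if i = v then 1 else 0) - 0)))
      (b v) := by
    simp only [canDiv]
    refine HasDerivAt.add (HasDerivAt.sub (HasDerivAt.sub ?_ ?_) (HasDerivAt.fun_sum ?_))
      (HasDerivAt.fun_sum ?_)
    · simpa using hasDerivAt_const (b v) (g a)
    · exact hasDerivAt_pder hgd b v
    · intro j _
      exact ((hasDerivAt_const (b v) (a j)).sub (hasDerivAt_update_coord b v j (b v))).const_mul _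
    · intro i _
      exact (hasDerivAt_pder ((contDiff_pder hg i).differentiable
          (by simp)) b v).mul
        ((hasDerivAt_update_coord b v i (b v)).sub (hasDerivAt_const (b v) (a i)))
  have := H.deriv
  simp only [dSnd]
  rw [this]
  simp only [Function.update_eq_self, zero_sub, sub_zero, mul_ite, mul_one, mul_zero,
    mul_neg, Finset.sum_add_distrib, Finset.sum_neg_distrib, Finset.sum_ite_eq']
  ring

lemma dFst_dSnd_canDiv {n : ℕ} (I J : Finset (Fin n)) (g : (Fin n → ℝ) → ℝ)
    (hg : ContDiff ℝ (⊤ : ℕ∞) g) (u v : Fin n) (r : Fin n → ℝ) :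
    dFst u (dSnd v (canDiv I J g)) r r =
      (if v ∈ J then pder u (pder v g) r else 0)
        - (if u ∈ I then pder v (pder u g) r else 0) := by
  have hfun : (fun t => dSnd v (canDiv I J g) (Function.update r u t) r)
      = fun t => -(pder v g r) + (if v ∈ J then pder v g (Function.update r u t) else 0)
        + (∑ i ∈ I, pder v (pder i g) r * (r i - Function.update r u t i))
        + (if v ∈ I then pder v g r else 0) :=
    funext fun t => dSnd_canDiv I J g hg v (Function.update r u t) r
  have H : HasDerivAt
      (fun t => -(pder v g r) + (if v ∈ J then pder v g (Function.update r u t) else 0)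
        + (∑ i ∈ I, pder v (pder i g) r * (r i - Function.update r u t i))
        + (if v ∈ I then pder v g r else 0))
      ((0 + (if v ∈ J then pder u (pder v g) r else 0)
        + ∑ i ∈ I, pder v (pder i g) r * (0 - if i = u then 1 else 0)) + 0)
      (r u) := by
    refine HasDerivAt.add (HasDerivAt.add (HasDerivAt.add ?_ ?_) (HasDerivAt.fun_sum ?_)) ?_
    · exact hasDerivAt_const _ _
    · by_cases h : v ∈ J
      · simp only [h, if_true]
        exact hasDerivAt_pder ((contDiff_pder hg v).differentiable
          (by simp)) r u
      · simp only [h, if_false]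
        exact hasDerivAt_const _ _
    · intro i _
      exact ((hasDerivAt_const (r u) (r i)).sub (hasDerivAt_update_coord r u i (r u))).const_mul _
    · exact hasDerivAt_const _ _
  simp only [dFst]
  rw [hfun, H.deriv]
  simp only [zero_sub, mul_neg, mul_ite, mul_one, mul_zero, Finset.sum_neg_distrib,
    Finset.sum_ite_eq', zero_add, add_zero]
  ring

theorem metric_from_divergence {n : ℕ} (I J : Finset (Fin n))
    (hdisj : Disjoint I J) (hunion : I ∪ J = Finset.univ)
    (g : (Fin n → ℝ) → ℝ) (hg : ContDiff ℝ (⊤ : ℕ∞) g)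
    (u v : Fin n) (r : Fin n → ℝ) :
    (u ∈ I → v ∈ I → -(dFst u (dSnd v (canDiv I J g)) r r) = pder u (pder v g) r) ∧
    (u ∈ J → v ∈ J → -(dFst u (dSnd v (canDiv I J g)) r r) = -(pder u (pder v g) r)) ∧
    (u ∈ I → v ∈ J → -(dFst u (dSnd v (canDiv I J g)) r r) = 0) ∧
    (u ∈ J → v ∈ I → -(dFst u (dSnd v (canDiv I J g)) r r) = 0) := by
  have key := dFst_dSnd_canDiv I J g hg u v r
  have comm := pder_comm hg u v r
  refine ⟨fun hu hv => ?_, fun hu hv => ?_, fun hu hv => ?_, fun hu hv => ?_⟩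
  · have hvJ : v ∉ J := fun h => (Finset.disjoint_left.mp hdisj hv) h
    rw [key]; simp [hu, hvJ, ← comm]
  · have huI : u ∉ I := fun h => (Finset.disjoint_left.mp hdisj h) hu
    rw [key]; simp [hv, huI]
  · have huI : u ∈ I := hu
    rw [key]; simp [hv, huI, comm]
  · have huI : u ∉ I := fun h => (Finset.disjoint_left.mp hdisj h) hu
    have hvJ : v ∉ J := fun h => (Finset.disjoint_left.mp hdisj hv) h
    rw [key]; simp [huI, hvJ]
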